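/- For every m > 1 there is a constant C_m > 0, given by C_m = 2^{m-1} - 1 for m ∈ (1,2] ∪ [3,∞) and C_m = m for m ∈ (2,3), such that (x+y)^m ≤ x^m + y^m + C_m(x y^{m-1} + x^{m-1} y) for all x, y > 0. -/

import Mathlib

open Real Set

/-- The constant `C_m`: `2^(m-1) - 1` for `m ∈ (1,2] ∪ [3,∞)` and `m` for `m ∈ (2,3)`. -/
noncomputable def Cm (m : ℝ) : ℝ := if m ≤ 2 ∨ 3 ≤ m then 2 ^ (m - 1) - 1 else m

noncomputable def gf (m C t : ℝ) : ℝ := 1 + t ^ m + C * (t + t ^ (m - 1)) - (1 + t) ^ m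
noncomputable def g1 (m C t : ℝ) : ℝ :=
  m * t ^ (m - 1) + C * (1 + (m - 1) * t ^ (m - 2)) - m * (1 + t) ^ (m - 1)
noncomputable def g2 (m C t : ℝ) : ℝ :=
  m * (m - 1) * t ^ (m - 2) + C * (m - 1) * (m - 2) * t ^ (m - 3)
    - m * (m - 1) * (1 + t) ^ (m - 2)
noncomputable def psif (m C t : ℝ) : ℝ :=
  m * t + C * (m - 2) - m * (t ^ (3 - m) * (1 + t) ^ (m - 2))
noncomputable def chif (m t : ℝ) : ℝ := t ^ (2 - m) * ((1 + t) ^ (m - 3) * (3 - m + t))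

lemma hd_rpow (p : ℝ) {t : ℝ} (ht : 0 < t) :
    HasDerivAt (fun s : ℝ => s ^ p) (p * t ^ (p - 1)) t :=
  Real.hasDerivAt_rpow_const (Or.inl ht.ne')

lemma hd_one_add_rpow (p : ℝ) {t : ℝ} (ht : 0 < t) :
    HasDerivAt (fun s : ℝ => (1 + s) ^ p) (p * (1 + t) ^ (p - 1)) t := by
  have h1 : HasDerivAt (fun s : ℝ => 1 + s) 1 t := (hasDerivAt_id t).const_add 1
  have h2 := (Real.hasDerivAt_rpow_const (x := 1 + t) (p := p)
    (Or.inl (by positivity))).comp t h1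
  simpa [Function.comp_def] using h2

lemma hd_gf (m C : ℝ) {t : ℝ} (ht : 0 < t) : HasDerivAt (gf m C) (g1 m C t) t := by
  have h1 := hd_rpow m ht
  have h2 := hd_rpow (m - 1) ht
  have h3 := hd_one_add_rpow m ht
  have h4 : HasDerivAt (fun s : ℝ => 1 + s ^ m + C * (s + s ^ (m - 1)) - (1 + s) ^ m)
      (0 + m * t ^ (m - 1) + C * (1 + (m - 1) * t ^ (m - 1 - 1)) - m * (1 + t) ^ (m - 1)) t := by
    exact (((hasDerivAt_const t 1).add h1).add
      (((hasDerivAt_id t).add h2).const_mul C)).sub h3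
  have : HasDerivAt (gf m C)
      (0 + m * t ^ (m - 1) + C * (1 + (m - 1) * t ^ (m - 1 - 1)) - m * (1 + t) ^ (m - 1)) t := h4
  convert this using 1
  unfold g1
  rw [show m - 1 - 1 = m - 2 by ring]
  ring

lemma hd_g1 (m C : ℝ) {t : ℝ} (ht : 0 < t) : HasDerivAt (g1 m C) (g2 m C t) t := by
  have h2 := hd_rpow (m - 1) ht
  have h2' := hd_rpow (m - 2) ht
  have h3 := hd_one_add_rpow (m - 1) ht
  have h4 : HasDerivAt (fun s : ℝ =>
      m * s ^ (m - 1) + C * (1 + (m - 1) * s ^ (m - 2)) - m * (1 + s) ^ (m - 1))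
      (m * ((m - 1) * t ^ (m - 1 - 1)) + C * (0 + (m - 1) * ((m - 2) * t ^ (m - 2 - 1)))
        - m * ((m - 1) * (1 + t) ^ (m - 1 - 1))) t := by
    exact ((h2.const_mul m).add
      (((hasDerivAt_const t 1).add (h2'.const_mul (m - 1))).const_mul C)).sub
      (h3.const_mul m)
  have : HasDerivAt (g1 m C)
      (m * ((m - 1) * t ^ (m - 1 - 1)) + C * (0 + (m - 1) * ((m - 2) * t ^ (m - 2 - 1)))
        - m * ((m - 1) * (1 + t) ^ (m - 1 - 1))) t := h4
  convert this using 1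
  unfold g2
  rw [show m - 1 - 1 = m - 2 by ring, show m - 2 - 1 = m - 3 by ring]
  ring

lemma hd_psif (m C : ℝ) {t : ℝ} (ht : 0 < t) :
    HasDerivAt (psif m C) (m - m * chif m t) t := by
  have h1 := hd_rpow (3 - m) ht
  have h2 := hd_one_add_rpow (m - 2) ht
  have h4 : HasDerivAt (fun s : ℝ => m * s + C * (m - 2) - m * (s ^ (3 - m) * (1 + s) ^ (m - 2)))
      (m * 1 + 0 - m * ((3 - m) * t ^ (3 - m - 1) * (1 + t) ^ (m - 2)
        + t ^ (3 - m) * ((m - 2) * (1 + t) ^ (m - 2 - 1)))) t := by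
    exact (((hasDerivAt_id t).const_mul m).add (hasDerivAt_const t (C * (m - 2)))).sub
      ((h1.mul h2).const_mul m)
  have : HasDerivAt (psif m C)
      (m * 1 + 0 - m * ((3 - m) * t ^ (3 - m - 1) * (1 + t) ^ (m - 2)
        + t ^ (3 - m) * ((m - 2) * (1 + t) ^ (m - 2 - 1)))) t := h4
  convert this using 1
  unfold chif
  rw [show (3:ℝ) - m - 1 = 2 - m by ring, show m - 2 - 1 = m - 3 by ring,
    show (3:ℝ) - m = (2 - m) + 1 by ring, Real.rpow_add ht, Real.rpow_one,
    show m - 2 = (m - 3) + 1 by ring, Real.rpow_add (by positivity : (0:ℝ) < 1 + t),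
    Real.rpow_one]
  ring

lemma g2_eq (m C : ℝ) {t : ℝ} (ht : 0 < t) :
    g2 m C t = (m - 1) * t ^ (m - 3) * psif m C t := by
  unfold g2 psif
  have e1 : t ^ (m - 3) * t ^ (3 - m) = 1 := by
    rw [← Real.rpow_add ht]; norm_num
  have e2 : t ^ (m - 3) * t = t ^ (m - 2) := by
    rw [show m - 2 = (m - 3) + 1 by ring, Real.rpow_add ht, Real.rpow_one]
  linear_combination (-(m * (m-1))) * e2 + (m * (m - 1) * (1 + t) ^ (m - 2)) * e1

lemma chi_le_one {m t : ℝ} (hm : 1 < m) (hmc : m ≤ 2 ∨ 3 ≤ m) (ht : 0 < t) (ht1 : t ≤ 1) :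
    chif m t ≤ 1 := by
  have h1t : (0:ℝ) < 1 + t := by linarith
  have hinv : (0:ℝ) ≤ 1 / t := by positivity
  rcases hmc with hmc | hmc
  · -- m ≤ 2 : p = 2 - m ≥ 0
    have hp0 : 0 ≤ 2 - m := by linarith
    have key : t ^ (2 - m) * (3 - m + t) ≤ (1 + t) ^ (3 - m) := by
      have hB : 1 + (3 - m) * (1 / t) ≤ (1 + 1 / t) ^ (3 - m) :=
        one_add_mul_self_le_rpow_one_add (by linarith) (by linarith)
      have hbase : (1 + t) = t * (1 + 1 / t) := by field_simp; ring
      have hsplit : (1 + t) ^ (3 - m) = t ^ (3 - m) * (1 + 1 / t) ^ (3 - m) := by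
        rw [hbase, Real.mul_rpow ht.le (by positivity)]
      have hmul : t ^ (3 - m) * (1 + (3 - m) * (1 / t)) ≤ (1 + t) ^ (3 - m) := by
        rw [hsplit]
        exact mul_le_mul_of_nonneg_left hB (by positivity)
      have hts : t ^ (3 - m) = t ^ (2 - m) * t := by
        rw [show (3:ℝ) - m = (2 - m) + 1 by ring, Real.rpow_add ht, Real.rpow_one]
      calc t ^ (2 - m) * (3 - m + t)
          = t ^ (3 - m) * (1 + (3 - m) * (1 / t)) := by
            rw [hts]; field_simp; ring
        _ ≤ (1 + t) ^ (3 - m) := hmul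
    have hneg : (1 + t) ^ (m - 3) = ((1 + t) ^ (3 - m))⁻¹ := by
      rw [← Real.rpow_neg h1t.le, show -(3 - m) = m - 3 by ring]
    unfold chif
    rw [hneg, show t ^ (2 - m) * (((1 + t) ^ (3 - m))⁻¹ * (3 - m + t))
      = (t ^ (2 - m) * (3 - m + t)) / ((1 + t) ^ (3 - m)) by ring,
      div_le_one (by positivity)]
    exact key
  · -- 3 ≤ m : a = m - 3 ≥ 0
    have ha0 : 0 ≤ m - 3 := by linarith
    rcases le_or_gt (3 - m + t) 0 with hneg | hpos
    · have : chif m t ≤ 0 := by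
        unfold chif
        have h1 : (0:ℝ) < t ^ (2 - m) := Real.rpow_pos_of_pos ht _
        have h2 : (0:ℝ) < (1 + t) ^ (m - 3) := Real.rpow_pos_of_pos h1t _
        have h3 : (1 + t) ^ (m - 3) * (3 - m + t) ≤ 0 :=
          mul_nonpos_iff.mpr (Or.inl ⟨h2.le, hneg⟩)
        exact mul_nonpos_iff.mpr (Or.inl ⟨h1.le, h3⟩)
      linarith
    · -- t > m - 3, so m - 3 < 1
      have ha1 : m - 3 ≤ 1 := by linarith
      have hB : (1 + 1 / t) ^ (m - 3) ≤ 1 + (m - 3) * (1 / t) :=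
        rpow_one_add_le_one_add_mul_self (by linarith) ha0 ha1
      have hbase : (1 + t) = t * (1 + 1 / t) := by field_simp; ring
      have hsplit : (1 + t) ^ (m - 3) = t ^ (m - 3) * (1 + 1 / t) ^ (m - 3) := by
        rw [hbase, Real.mul_rpow ht.le (by positivity)]
      have hup : (1 + t) ^ (m - 3) ≤ t ^ (m - 3) * (1 + (m - 3) * (1 / t)) := by
        rw [hsplit]
        exact mul_le_mul_of_nonneg_left hB (by positivity)
      have key : (1 + t) ^ (m - 3) * (3 - m + t) ≤ t ^ (m - 2) := by
        have h1 : (1 + t) ^ (m - 3) * (3 - m + t)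
            ≤ t ^ (m - 3) * (1 + (m - 3) * (1 / t)) * (3 - m + t) :=
          mul_le_mul_of_nonneg_right hup hpos.le
        have hts : t ^ (m - 2) = t ^ (m - 3) * t := by
          rw [show m - 2 = (m - 3) + 1 by ring, Real.rpow_add ht, Real.rpow_one]
        have h2 : t ^ (m - 3) * (1 + (m - 3) * (1 / t)) * (3 - m + t)
            = t ^ (m - 3) * t - t ^ (m - 3) * (m - 3) ^ 2 / t := by
          field_simp; ring
        have h3 : 0 ≤ t ^ (m - 3) * (m - 3) ^ 2 / t := by positivity
        calc (1 + t) ^ (m - 3) * (3 - m + t)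
            ≤ t ^ (m - 3) * (1 + (m - 3) * (1 / t)) * (3 - m + t) := h1
          _ = t ^ (m - 3) * t - t ^ (m - 3) * (m - 3) ^ 2 / t := h2
          _ ≤ t ^ (m - 3) * t := by linarith
          _ = t ^ (m - 2) := hts.symm
      have hinv2 : t ^ (2 - m) = (t ^ (m - 2))⁻¹ := by
        rw [← Real.rpow_neg ht.le, show -(m - 2) = 2 - m by ring]
      unfold chif
      rw [hinv2, show (t ^ (m - 2))⁻¹ * ((1 + t) ^ (m - 3) * (3 - m + t))
        = ((1 + t) ^ (m - 3) * (3 - m + t)) / (t ^ (m - 2)) by ring,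
        div_le_one (Real.rpow_pos_of_pos ht _)]
      exact key

lemma psif_mono {m : ℝ} (C : ℝ) (hm : 1 < m) (hmc : m ≤ 2 ∨ 3 ≤ m) :
    MonotoneOn (psif m C) (Ioc 0 1) := by
  apply monotoneOn_of_deriv_nonneg (convex_Ioc 0 1)
  · exact fun x hx => (hd_psif m C hx.1).continuousAt.continuousWithinAt
  · rw [interior_Ioc]
    exact fun x hx => (hd_psif m C hx.1).differentiableAt.differentiableWithinAt
  · rw [interior_Ioc]
    intro x hx
    rw [(hd_psif m C hx.1).deriv]
    have := chi_le_one hm hmc hx.1 hx.2.le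
    nlinarith

lemma cont_rpow (p : ℝ) (hp : 0 ≤ p) : Continuous (fun t : ℝ => t ^ p) := by
  rw [continuous_iff_continuousAt]
  exact fun x => Real.continuousAt_rpow_const x p (Or.inr hp)

lemma cont_gf {m : ℝ} (C : ℝ) (hm : 1 < m) : Continuous (gf m C) := by
  unfold gf
  have h1 := cont_rpow m (by linarith)
  have h2 := cont_rpow (m - 1) (by linarith)
  exact ((continuous_const.add h1).add
    (continuous_const.mul (continuous_id.add (h2.comp continuous_id)))).sub
    (h1.comp (continuous_const.add continuous_id))

lemma gf_zero {m : ℝ} (C : ℝ) (hm : 1 < m) : gf m C 0 = 0 := by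
  unfold gf
  rw [Real.zero_rpow (by linarith), Real.zero_rpow (by linarith)]
  norm_num

lemma two_rpow_m {m : ℝ} : (2:ℝ) ^ m = 2 * 2 ^ (m - 1) := by
  have := Real.rpow_add (by norm_num : (0:ℝ) < 2) 1 (m - 1)
  rw [show (1:ℝ) + (m - 1) = m by ring, Real.rpow_one] at this
  exact this

lemma gf_one {m : ℝ} : gf m (2 ^ (m - 1) - 1) 1 = 0 := by
  have h2 : (2:ℝ) ^ m = 2 * 2 ^ (m - 1) := two_rpow_m
  unfold gf
  rw [Real.one_rpow, Real.one_rpow, show (1:ℝ) + 1 = 2 by norm_num, h2]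
  set A := (2:ℝ) ^ (m - 1)
  ring

lemma g1_one {m : ℝ} : g1 m (2 ^ (m - 1) - 1) 1 = 0 := by
  unfold g1
  rw [Real.one_rpow, Real.one_rpow, show (1:ℝ) + 1 = 2 by norm_num]
  set A := (2:ℝ) ^ (m - 1)
  ring

/-- If `ψ u ≥ 0` then `g u ≥ 0` (for `C = 2^(m-1)-1`). -/
lemma lemA {m : ℝ} (hm : 1 < m) (hmc : m ≤ 2 ∨ 3 ≤ m) {u : ℝ} (hu : u ∈ Ioc (0:ℝ) 1)
    (hpsi : 0 ≤ psif m (2 ^ (m - 1) - 1) u) : 0 ≤ gf m (2 ^ (m - 1) - 1) u := by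
  set C := (2:ℝ) ^ (m - 1) - 1 with hC
  obtain ⟨hu0, hu1⟩ := hu
  have hψ := psif_mono C hm hmc
  -- g1 is monotone on [u,1]
  have hg1mono : MonotoneOn (g1 m C) (Icc u 1) := by
    apply monotoneOn_of_deriv_nonneg (convex_Icc u 1)
    · exact fun x hx => (hd_g1 m C (lt_of_lt_of_le hu0 hx.1)).continuousAt.continuousWithinAt
    · rw [interior_Icc]
      exact fun x hx =>
        (hd_g1 m C (hu0.trans hx.1)).differentiableAt.differentiableWithinAt
    · rw [interior_Icc]
      intro x hx
      have hx0 : 0 < x := hu0.trans hx.1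
      rw [(hd_g1 m C hx0).deriv, g2_eq m C hx0]
      have h1 : psif m C u ≤ psif m C x :=
        hψ ⟨hu0, hu1⟩ ⟨hx0, hx.2.le⟩ hx.1.le
      have h2 : (0:ℝ) < x ^ (m - 3) := Real.rpow_pos_of_pos hx0 _
      have h3 : (0:ℝ) ≤ (m - 1) * x ^ (m - 3) := by nlinarith
      nlinarith
  -- hence g1 ≤ 0 on [u,1]
  have hg1le : ∀ s ∈ Icc u 1, g1 m C s ≤ 0 := by
    intro s hs
    have := hg1mono hs (right_mem_Icc.mpr hu1) hs.2
    rw [g1_one] at this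
    exact this
  -- hence gf is antitone on [u,1]
  have hgfanti : AntitoneOn (gf m C) (Icc u 1) := by
    apply antitoneOn_of_deriv_nonpos (convex_Icc u 1)
    · exact (cont_gf C hm).continuousOn
    · rw [interior_Icc]
      exact fun x hx =>
        (hd_gf m C (hu0.trans hx.1)).differentiableAt.differentiableWithinAt
    · rw [interior_Icc]
      intro x hx
      rw [(hd_gf m C (hu0.trans hx.1)).deriv]
      exact hg1le x ⟨hx.1.le, hx.2.le⟩
  have := hgfanti (left_mem_Icc.mpr hu1) (right_mem_Icc.mpr hu1) hu1
  rw [gf_one] at this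
  exact this

/-- If `g T ≥ 0`, `ψ < 0` on `(0,T)`, then `g t ≥ 0` for `0 < t < T`. -/
lemma lemB {m C : ℝ} (hm : 1 < m) {t T : ℝ} (ht : 0 < t) (htT : t < T)
    (hgT : 0 ≤ gf m C T) (hψneg : ∀ s ∈ Ioo (0:ℝ) T, psif m C s < 0) :
    0 ≤ gf m C t := by
  by_contra hneg
  push_neg at hneg
  -- MVT on [0,t]
  obtain ⟨c₁, hc₁, e₁⟩ := exists_hasDerivAt_eq_slope (gf m C) (g1 m C) ht
    (cont_gf C hm).continuousOn (fun x hx => hd_gf m C hx.1)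
  -- MVT on [t,T]
  obtain ⟨c₂, hc₂, e₂⟩ := exists_hasDerivAt_eq_slope (gf m C) (g1 m C) htT
    (cont_gf C hm).continuousOn (fun x hx => hd_gf m C (ht.trans hx.1))
  have hv₁ : g1 m C c₁ < 0 := by
    rw [e₁, gf_zero C hm]
    apply div_neg_of_neg_of_pos <;> simpa
  have hv₂ : 0 < g1 m C c₂ := by
    rw [e₂]
    apply div_pos <;> linarith
  -- g1 antitone on (0,T)
  have hanti : AntitoneOn (g1 m C) (Ioo 0 T) := by
    apply antitoneOn_of_deriv_nonpos (convex_Ioo 0 T)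
    · exact fun x hx => (hd_g1 m C hx.1).continuousAt.continuousWithinAt
    · rw [interior_Ioo]
      exact fun x hx => (hd_g1 m C hx.1).differentiableAt.differentiableWithinAt
    · rw [interior_Ioo]
      intro x hx
      rw [(hd_g1 m C hx.1).deriv, g2_eq m C hx.1]
      have h1 := hψneg x hx
      have h2 : (0:ℝ) < (m - 1) * x ^ (m - 3) :=
        mul_pos (by linarith) (Real.rpow_pos_of_pos hx.1 _)
      exact (mul_neg_of_pos_of_neg h2 h1).le
  have hc₁' : c₁ ∈ Ioo (0:ℝ) T := ⟨hc₁.1, hc₁.2.trans htT⟩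
  have hc₂' : c₂ ∈ Ioo (0:ℝ) T := ⟨ht.trans hc₂.1, hc₂.2⟩
  have := hanti hc₁' hc₂' (hc₁.2.trans hc₂.1).le
  linarith

lemma key13 {m : ℝ} (hm : 1 < m) (hmc : m ≤ 2 ∨ 3 ≤ m) {t : ℝ} (ht : 0 < t) (ht1 : t ≤ 1) :
    0 ≤ gf m (2 ^ (m - 1) - 1) t := by
  set C := (2:ℝ) ^ (m - 1) - 1 with hC
  have hψ := psif_mono C hm hmc
  by_cases hp : 0 ≤ psif m C t
  · exact lemA hm hmc ⟨ht, ht1⟩ hp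
  push_neg at hp
  rcases eq_or_lt_of_le ht1 with rfl | ht1'
  · rw [gf_one]
  by_cases hS : ∃ s ∈ Icc t 1, 0 ≤ psif m C s
  · -- T := inf of the set where ψ ≥ 0
    set S : Set ℝ := {s | s ∈ Icc t 1 ∧ 0 ≤ psif m C s} with hSdef
    have hSne : S.Nonempty := by
      obtain ⟨s, hs1, hs2⟩ := hS
      exact ⟨s, hs1, hs2⟩
    have hSbdd : BddBelow S := ⟨t, fun s hs => hs.1.1⟩
    have hScl : IsClosed S := by
      have : S = Icc t 1 ∩ psif m C ⁻¹' Ici 0 := by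
        rfl
      rw [this]
      apply ContinuousOn.preimage_isClosed_of_isClosed _ isClosed_Icc isClosed_Ici
      exact fun x hx => (hd_psif m C (ht.trans_le hx.1)).continuousAt.continuousWithinAt
    set T := sInf S with hT
    have hTS : T ∈ S := hScl.csInf_mem hSne hSbdd
    have hTt : t < T := by
      rcases eq_or_lt_of_le hTS.1.1 with h | h
      · exact absurd (h ▸ hTS.2) (not_le.mpr hp)
      · exact h
    have hgT : 0 ≤ gf m C T := lemA hm hmc ⟨ht.trans hTt, hTS.1.2⟩ hTS.2
    apply lemB hm ht hTt hgT
    intro s hs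
    rcases le_or_gt s t with h | h
    · exact lt_of_le_of_lt (hψ ⟨hs.1, h.trans ht1⟩ ⟨ht, ht1⟩ h) hp
    · by_contra hcon
      push_neg at hcon
      have : s ∈ S := ⟨⟨h.le, hs.2.le.trans hTS.1.2⟩, hcon⟩
      exact absurd (csInf_le hSbdd this) (not_le.mpr hs.2)
  · push_neg at hS
    apply lemB hm ht ht1' (le_of_eq gf_one.symm)
    intro s hs
    rcases le_or_gt s t with h | h
    · exact lt_of_le_of_lt (hψ ⟨hs.1, h.trans ht1⟩ ⟨ht, ht1⟩ h) hp
    · exact hS s ⟨h.le, hs.2.le⟩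

lemma key2 {m : ℝ} (hm2 : 2 < m) (hm3 : m < 3) {t : ℝ} (ht : 0 ≤ t) :
    0 ≤ gf m m t := by
  have hm : 1 < m := by linarith
  set ψ : ℝ → ℝ := fun s => 1 + s ^ (m - 1) + (m - 1) * s ^ (m - 2) - (1 + s) ^ (m - 1)
    with hψdef
  have hdψ : ∀ {s : ℝ}, 0 < s → HasDerivAt ψ
      ((m - 1) * s ^ (m - 2) + (m - 1) * ((m - 2) * s ^ (m - 3)) - (m - 1) * (1 + s) ^ (m - 2)) s := by
    intro s hs
    have h1 := hd_rpow (m - 1) hs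
    have h2 := hd_rpow (m - 2) hs
    have h3 := hd_one_add_rpow (m - 1) hs
    have h4 : HasDerivAt ψ (0 + (m - 1) * s ^ (m - 1 - 1)
        + (m - 1) * ((m - 2) * s ^ (m - 2 - 1)) - (m - 1) * (1 + s) ^ (m - 1 - 1)) s :=
      (((hasDerivAt_const s 1).add h1).add (h2.const_mul (m - 1))).sub h3
    convert h4 using 1
    rw [show m - 1 - 1 = m - 2 by ring, show m - 2 - 1 = m - 3 by ring]
    ring
  have hψcont : Continuous ψ := by
    have h1 := cont_rpow (m - 1) (by linarith)
    have h2 := cont_rpow (m - 2) (by linarith)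
    exact ((continuous_const.add h1).add
      (continuous_const.mul h2)).sub (h1.comp (continuous_const.add continuous_id))
  -- Bernoulli gives ψ' ≥ 0
  have hψ'pos : ∀ {s : ℝ}, 0 < s →
      0 ≤ (m - 1) * s ^ (m - 2) + (m - 1) * ((m - 2) * s ^ (m - 3)) - (m - 1) * (1 + s) ^ (m - 2) := by
    intro s hs
    have hB : (1 + 1 / s) ^ (m - 2) ≤ 1 + (m - 2) * (1 / s) :=
      rpow_one_add_le_one_add_mul_self
        (by have := one_div_pos.mpr hs; linarith) (by linarith) (by linarith)
    have hbase : (1 + s) = s * (1 + 1 / s) := by field_simp; ring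
    have hsplit : (1 + s) ^ (m - 2) = s ^ (m - 2) * (1 + 1 / s) ^ (m - 2) := by
      rw [hbase, Real.mul_rpow hs.le (by positivity)]
    have hts : s ^ (m - 2) = s ^ (m - 3) * s := by
      rw [show m - 2 = (m - 3) + 1 by ring, Real.rpow_add hs, Real.rpow_one]
    have hup : (1 + s) ^ (m - 2) ≤ s ^ (m - 2) + (m - 2) * s ^ (m - 3) := by
      calc (1 + s) ^ (m - 2) = s ^ (m - 2) * (1 + 1 / s) ^ (m - 2) := hsplit
        _ ≤ s ^ (m - 2) * (1 + (m - 2) * (1 / s)) :=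
            mul_le_mul_of_nonneg_left hB (by positivity)
        _ = s ^ (m - 2) + (m - 2) * s ^ (m - 3) := by
            rw [hts]; field_simp
    nlinarith [hup]
  -- ψ is monotone on [0,∞)
  have hψmono : MonotoneOn ψ (Ici 0) := by
    apply monotoneOn_of_deriv_nonneg (convex_Ici 0) hψcont.continuousOn
    · rw [interior_Ici]
      exact fun x hx => (hdψ hx).differentiableAt.differentiableWithinAt
    · rw [interior_Ici]
      intro x hx
      rw [(hdψ hx).deriv]
      exact hψ'pos hx
  have hψ0 : ψ 0 = 0 := by
    simp only [hψdef]
    rw [Real.zero_rpow (by linarith), Real.zero_rpow (by linarith)]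
    norm_num
  have hψnn : ∀ {s : ℝ}, 0 ≤ s → 0 ≤ ψ s := by
    intro s hs
    have := hψmono (Set.self_mem_Ici) hs hs
    rwa [hψ0] at this
  -- gf is monotone on [0,∞)
  have hgfmono : MonotoneOn (gf m m) (Ici 0) := by
    apply monotoneOn_of_deriv_nonneg (convex_Ici 0) (cont_gf m hm).continuousOn
    · rw [interior_Ici]
      exact fun x hx => (hd_gf m m hx).differentiableAt.differentiableWithinAt
    · rw [interior_Ici]
      intro x hx
      rw [(hd_gf m m hx).deriv]
      have h1 : g1 m m x = m * ψ x := by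
        simp only [hψdef]; unfold g1; ring
      rw [h1]
      exact mul_nonneg (by linarith) (hψnn hx.le)
  have := hgfmono Set.self_mem_Ici ht ht
  rwa [gf_zero m hm] at this

lemma scale {m C x y : ℝ} (hx : 0 < x) (hy : 0 < y) (h : 0 ≤ gf m C (y / x)) :
    (x + y) ^ m ≤ x ^ m + y ^ m + C * (x * y ^ (m - 1) + x ^ (m - 1) * y) := by
  set t := y / x with htdef
  have ht : 0 < t := div_pos hy hx
  have hyx : y = x * t := by rw [htdef]; field_simp
  have hxm : x ^ (m - 1) * x = x ^ m := by
    have := (Real.rpow_add hx (m - 1) 1).symm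
    rw [Real.rpow_one, show m - 1 + 1 = m by ring] at this
    exact this
  have h2 : (x * (1 + t)) ^ m = x ^ m * (1 + t) ^ m :=
    Real.mul_rpow hx.le (by linarith)
  have hscaled : 0 ≤ x ^ m * (1 + t ^ m + C * (t + t ^ (m - 1)) - (1 + t) ^ m) :=
    mul_nonneg (Real.rpow_pos_of_pos hx m).le h
  have hident : x ^ m * (1 + t ^ m + C * (t + t ^ (m - 1)) - (1 + t) ^ m)
      = x ^ m + x ^ m * t ^ m
        + C * (x * (x ^ (m - 1) * t ^ (m - 1)) + x ^ (m - 1) * (x * t))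
        - (x * (1 + t)) ^ m := by
    linear_combination (- (C * t) - C * t ^ (m - 1)) * hxm + h2
  rw [hyx, show x + x * t = x * (1 + t) by ring,
    Real.mul_rpow hx.le ht.le, Real.mul_rpow hx.le ht.le]
  unfold gf at hscaled
  linarith [hident ▸ hscaled]

theorem sum_rpow_le (m : ℝ) (hm : 1 < m) (x y : ℝ) (hx : 0 < x) (hy : 0 < y) :
    0 < Cm m ∧ (x + y) ^ m ≤ x ^ m + y ^ m + Cm m * (x * y ^ (m - 1) + x ^ (m - 1) * y) := by
  constructor
  · unfold Cm
    split_ifs with h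
    · have h1 : (1:ℝ) < 2 ^ (m - 1) := by
        apply Real.one_lt_rpow_iff_of_pos (by norm_num) |>.mpr
        exact Or.inl ⟨by norm_num, by linarith⟩
      linarith
    · linarith
  · unfold Cm
    split_ifs with h
    · rcases le_total y x with hxy | hxy
      · exact scale hx hy (key13 hm h (div_pos hy hx) ((div_le_one hx).mpr hxy))
      · have h2 := scale hy hx (key13 hm h (div_pos hx hy) ((div_le_one hy).mpr hxy))
        have e : y ^ m + x ^ m + (2 ^ (m-1) - 1) * (y * x ^ (m - 1) + y ^ (m - 1) * x)
            = x ^ m + y ^ m + (2 ^ (m-1) - 1) * (x * y ^ (m - 1) + x ^ (m - 1) * y) := by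
          ring
        rw [add_comm y x, e] at h2
        exact h2
    · push_neg at h
      exact scale hx hy (key2 h.1 h.2 (div_pos hy hx).le)
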